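/- Let L > 0 and b > 0 be real numbers, and let χ > 0 be a real number with χ² ≠ L. For each positive integer N set n_N = (b+1)·N, δ_N = (n_N + L + 1)/N and λ_N = χ/√(N·δ_N). Then lim_{N→∞} (1/N) · ĝ_N^{(n_N,L)}(λ_N²) · λ_N^{2L} · (1+λ_N²)^{−(n_N+L+1)} = (χ²)^L · ((χ²−L)·E_{1,L+1}(χ²) + 1/Γ(L)) · e^{−χ²} / (χ² − L), where all powers with real exponents are real powers. -/

import Mathlib

open Finset Filter

noncomputable section

/-- `q_N^{(n,L)}(y)`. -/
def qS (n L : ℝ) (N : ℕ) (y : ℝ) : ℝ :=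
  ∑ k ∈ Finset.range (N + 1),
    Real.Gamma (L + n + 1) / (Real.Gamma ((k : ℝ) + L + 1) * Real.Gamma (n + 1 - k)) * y ^ k

/-- `q̂_N^{(n,L)}(y|x)`. -/
def qhat (n L : ℝ) (N : ℕ) (y x : ℝ) : ℝ :=
  qS n L N y + (1 / (n * x - L)) * (Real.Gamma (L + n + 1) / (Real.Gamma (n + 1) * Real.Gamma L))

/-- `ĝ_N^{(n,L)}(x)`. -/
def ghat (n L : ℝ) (N : ℕ) (x : ℝ) : ℝ :=
  (L + (N : ℝ) + 1) * qhat n L (N + 1) x x - x * (n - N - 1) * qhat n L N x x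

/-- The two-parametric Mittag-Leffler function `E_{1,β}(y)` with first parameter `1`. -/
def mittagLeffler1 (β : ℝ) (y : ℝ) : ℝ := ∑' k : ℕ, y ^ k / Real.Gamma ((k : ℝ) + β)

namespace GhatAux

open Filter Real Topology

lemma tendsto_add_div (c : ℝ) : Tendsto (fun x : ℝ => (x + c) / x) atTop (𝓝 1) := by
  have h : Tendsto (fun x : ℝ => 1 + c / x) atTop (𝓝 (1 + 0)) :=
    tendsto_const_nhds.add (Tendsto.div_atTop tendsto_const_nhds tendsto_id)
  rw [add_zero] at h
  refine h.congr' ?_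
  filter_upwards [eventually_gt_atTop (0:ℝ)] with x hx
  field_simp

lemma gamma_add_le_base {x f : ℝ} (hx : 0 < x) (hf0 : 0 ≤ f) (hf1 : f ≤ 1) :
    Gamma (x + f) ≤ Gamma x * x ^ f := by
  rcases eq_or_lt_of_le hf0 with h0 | h0
  · rw [← h0]; simp
  rcases eq_or_lt_of_le hf1 with h1 | h1
  · rw [h1, Gamma_add_one hx.ne', rpow_one, mul_comm]
  have key := Gamma_mul_add_mul_le_rpow_Gamma_mul_rpow_Gamma hx
    (by linarith : (0:ℝ) < x + 1) (by linarith : (0:ℝ) < 1 - f) h0 (by ring)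
  have e1 : (1 - f) * x + f * (x + 1) = x + f := by ring
  rw [e1, Gamma_add_one hx.ne'] at key
  have hG := Gamma_pos_of_pos hx
  calc Gamma (x + f) ≤ Gamma x ^ (1 - f) * (x * Gamma x) ^ f := key
    _ = Gamma x * x ^ f := by
        rw [mul_rpow hx.le hG.le, ← mul_assoc, mul_comm (Gamma x ^ (1-f)) (x ^ f),
          mul_assoc, ← rpow_add hG]
        norm_num
        ring

lemma gamma_add_ge_base {x f : ℝ} (hx : 0 < x) (hf0 : 0 ≤ f) (hf1 : f ≤ 1) :
    Gamma x * x * (x + f) ^ (f - 1) ≤ Gamma (x + f) := by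
  have hxf : 0 < x + f := by linarith
  rcases eq_or_lt_of_le hf0 with h0 | h0
  · rw [← h0]; simp [rpow_neg_one, mul_assoc, mul_inv_cancel₀ hx.ne']
  rcases eq_or_lt_of_le hf1 with h1 | h1
  · rw [h1]; simp [Gamma_add_one hx.ne', mul_comm]
  have key := Gamma_mul_add_mul_le_rpow_Gamma_mul_rpow_Gamma hxf
    (by linarith : (0:ℝ) < x + 1 + f) h0 (by linarith : (0:ℝ) < 1 - f) (by ring)
  have e1 : f * (x + f) + (1 - f) * (x + 1 + f) = x + 1 := by ring
  have e2 : x + 1 + f = (x + f) + 1 := by ring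
  rw [e1, e2, Gamma_add_one hxf.ne'] at key
  have hGf := Gamma_pos_of_pos hxf
  have key2 : Gamma (x + 1) ≤ Gamma (x + f) * (x + f) ^ (1 - f) := by
    calc Gamma (x+1) ≤ Gamma (x+f) ^ f * ((x+f) * Gamma (x+f)) ^ (1-f) := key
      _ = Gamma (x+f) * (x+f) ^ (1-f) := by
          rw [mul_rpow hxf.le hGf.le, mul_comm ((x+f) ^ (1-f)) (Gamma (x+f) ^ (1-f)),
            ← mul_assoc, ← rpow_add hGf]
          norm_num
  rw [Gamma_add_one hx.ne', mul_comm x (Gamma x)] at key2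
  have hp : (0:ℝ) < (x + f) ^ (1 - f) := rpow_pos_of_pos hxf _
  have : (x + f) ^ (f - 1) = ((x + f) ^ (1 - f))⁻¹ := by
    rw [← rpow_neg hxf.le]; norm_num
  rw [this, mul_assoc]
  calc Gamma x * (x * ((x+f)^(1-f))⁻¹) = (Gamma x * x) * ((x+f)^(1-f))⁻¹ := by ring
    _ ≤ Gamma (x + f) := by
        rw [← div_eq_mul_inv, div_le_iff₀ hp]
        exact key2

lemma gamma_add_le_aux (m : ℕ) : ∀ {x a : ℝ}, 0 < x → 0 ≤ a → a ≤ m + 1 →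
    Gamma (x + a) ≤ Gamma x * (x + a) ^ a := by
  induction m with
  | zero =>
    intro x a hx ha0 ha1
    norm_num at ha1
    calc Gamma (x + a) ≤ Gamma x * x ^ a := gamma_add_le_base hx ha0 ha1
      _ ≤ Gamma x * (x + a) ^ a :=
        mul_le_mul_of_nonneg_left (rpow_le_rpow hx.le (by linarith) ha0)
          (Gamma_pos_of_pos hx).le
  | succ m ih =>
    intro x a hx ha0 ha1
    rcases le_or_gt a (m + 1) with h | h
    · exact ih hx ha0 h
    have h1 : (1:ℝ) ≤ a := by
      have hm : (0:ℝ) ≤ (m:ℝ) := Nat.cast_nonneg m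
      linarith
    have ha0' : 0 ≤ a - 1 := by linarith
    have hxa1 : 0 < x + (a - 1) := by linarith
    have e : Gamma (x + a) = (x + (a - 1)) * Gamma (x + (a - 1)) := by
      rw [show x + a = (x + (a - 1)) + 1 by ring, Gamma_add_one hxa1.ne']
    rw [e]
    have hib := ih hx ha0' (by push_cast at ha1 ⊢; linarith)
    have hGx := (Gamma_pos_of_pos hx).le
    have hxa : (0:ℝ) < x + a := by linarith
    calc (x + (a-1)) * Gamma (x + (a-1))
        ≤ (x + (a-1)) * (Gamma x * (x + (a-1)) ^ (a-1)) :=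
          mul_le_mul_of_nonneg_left hib hxa1.le
      _ ≤ (x + a) * (Gamma x * (x + a) ^ (a-1)) := by
          apply mul_le_mul (by linarith)
            (mul_le_mul_of_nonneg_left (rpow_le_rpow hxa1.le (by linarith) ha0') hGx)
            (by positivity) hxa.le
      _ = Gamma x * (x + a) ^ a := by
          rw [rpow_sub hxa, rpow_one]
          field_simp

lemma gamma_add_le {x a : ℝ} (hx : 0 < x) (ha : 0 ≤ a) :
    Gamma (x + a) ≤ Gamma x * (x + a) ^ a := by
  refine gamma_add_le_aux ⌈a⌉₊ hx ha ?_
  calc a ≤ ⌈a⌉₊ := Nat.le_ceil a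
    _ ≤ (⌈a⌉₊ : ℝ) + 1 := by linarith


lemma tendsto_ratio_aux (m : ℕ) : ∀ {a : ℝ}, 0 ≤ a → a ≤ m + 1 →
    Tendsto (fun x : ℝ => Gamma (x + a) / (Gamma x * x ^ a)) atTop (𝓝 1) := by
  induction m with
  | zero =>
    intro a ha0 ha1
    norm_num at ha1
    have hlow : Tendsto (fun x : ℝ => (x / (x + a)) ^ (1 - a)) atTop (𝓝 1) := by
      have hb : Tendsto (fun x : ℝ => x / (x + a)) atTop (𝓝 1) := by
        have := (tendsto_add_div (-a)).comp (tendsto_atTop_add_const_right atTop a tendsto_id)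
        refine this.congr fun x => ?_
        simp [Function.comp]
      have hc : ContinuousAt (fun t : ℝ => t ^ (1 - a)) 1 :=
        Real.continuousAt_rpow_const 1 (1-a) (Or.inl one_ne_zero)
      have := hc.tendsto.comp hb
      simpa [Function.comp_def] using this
    refine tendsto_of_tendsto_of_tendsto_of_le_of_le' hlow tendsto_const_nhds ?_ ?_
    · filter_upwards [eventually_gt_atTop (0:ℝ)] with x hx
      have hxa : 0 < x + a := by linarith
      have hden : 0 < Gamma x * x ^ a :=
        mul_pos (Gamma_pos_of_pos hx) (rpow_pos_of_pos hx a)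
      have key := gamma_add_ge_base hx ha0 ha1
      have e1 : (x/(x+a))^(1-a) = Gamma x * x * (x+a)^(a-1) / (Gamma x * x^a) := by
        rw [div_rpow hx.le hxa.le, rpow_sub hx, rpow_one,
          show a - 1 = -(1-a) by ring, rpow_neg hxa.le]
        rw [div_eq_div_iff (by positivity) hden.ne']
        field_simp
      rw [e1]
      exact div_le_div_of_nonneg_right key hden.le
    · filter_upwards [eventually_gt_atTop (0:ℝ)] with x hx
      have hden : 0 < Gamma x * x ^ a :=
        mul_pos (Gamma_pos_of_pos hx) (rpow_pos_of_pos hx a)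
      rw [div_le_one hden]
      exact gamma_add_le_base hx ha0 ha1
  | succ m ih =>
    intro a ha0 ha1
    rcases le_or_gt a (m+1) with h | h
    · exact ih ha0 h
    have hm : (0:ℝ) ≤ (m:ℝ) := Nat.cast_nonneg m
    have h1 : (1:ℝ) ≤ a := by linarith
    have hprev := ih (a := a - 1) (by linarith) (by push_cast at ha1 ⊢; linarith)
    have hmul : Tendsto
        (fun x : ℝ => Gamma (x + (a-1)) / (Gamma x * x ^ (a-1)) * ((x + (a-1)) / x))
        atTop (𝓝 (1*1)) := hprev.mul (tendsto_add_div (a-1))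
    rw [one_mul] at hmul
    refine hmul.congr' ?_
    filter_upwards [eventually_gt_atTop (0:ℝ)] with x hx
    have hxa1 : 0 < x + (a-1) := by linarith
    have hΓ : Gamma x ≠ 0 := (Gamma_pos_of_pos hx).ne'
    have e : Gamma (x + a) = (x + (a-1)) * Gamma (x + (a-1)) := by
      rw [show x + a = (x + (a-1)) + 1 by ring, Gamma_add_one hxa1.ne']
    have ex : x ^ a = x ^ (a-1) * x := by
      rw [show a = (a-1) + 1 by ring, rpow_add hx, rpow_one]
      ring_nf
    rw [e, ex]
    have hxp : x ^ (a-1) ≠ 0 := (rpow_pos_of_pos hx _).ne'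
    field_simp

lemma tendsto_gamma_ratio {a : ℝ} (ha : 0 ≤ a) :
    Tendsto (fun x : ℝ => Gamma (x + a) / (Gamma x * x ^ a)) atTop (𝓝 1) := by
  refine tendsto_ratio_aux ⌈a⌉₊ ha ?_
  have := Nat.le_ceil a
  linarith

end GhatAux

set_option maxHeartbeats 2000000
open Real Topology

/-- Singular-origin asymptotics of the on-diagonal overlap prefactor `ĝ_N · ω̂` of the
induced spherical unitary ensemble. -/
theorem ghat_singular_origin_asymptotics (L b : ℝ) (hL : 0 < L) (hb : 0 < b)
    (χ : ℝ) (hχ : 0 < χ) (hχL : χ ^ 2 ≠ L) :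
    Tendsto (fun N : ℕ =>
      let nN : ℝ := (b + 1) * N
      let δN : ℝ := (nN + L + 1) / N
      let lamN : ℝ := χ / Real.sqrt (N * δN)
      (1 / (N : ℝ)) * ghat nN L N (lamN ^ 2) * lamN ^ (2 * L) * (1 + lamN ^ 2) ^ (-(nN + L + 1)))
      atTop
      (nhds ((χ ^ 2) ^ L *
        ((χ ^ 2 - L) * mittagLeffler1 (L + 1) (χ ^ 2) + 1 / Real.Gamma L) *
        Real.exp (-χ ^ 2) / (χ ^ 2 - L))) := by
  classical
  have hy0 : (0:ℝ) < χ ^ 2 := by positivity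
  set y : ℝ := χ ^ 2 with hy
  have hGL : 0 < Real.Gamma L := Real.Gamma_pos_of_pos hL
  have hsub : y - L ≠ 0 := sub_ne_zero.mpr hχL
  set nn : ℕ → ℝ := fun N => (b + 1) * N with hnn
  set np : ℕ → ℝ := fun N => nn N + L + 1 with hnp
  have hnn0 : ∀ N, 0 ≤ nn N := fun N =>
    mul_nonneg (by linarith) (Nat.cast_nonneg N)
  have hnp0 : ∀ N, 0 < np N := fun N => by
    have := hnn0 N; simp only [hnp]; linarith
  set xx : ℕ → ℝ := fun N => y / np N with hxx
  have hxxpos : ∀ N, 0 < xx N := fun N => div_pos hy0 (hnp0 N)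
  have hnn_top : Tendsto nn atTop atTop := by
    exact (tendsto_natCast_atTop_atTop (R := ℝ)).const_mul_atTop (by linarith : (0:ℝ) < b + 1)
  have hnp_top : Tendsto np atTop atTop := by
    have := tendsto_atTop_add_const_right atTop (L + 1) hnn_top
    refine this.congr fun N => by simp only [hnp]; ring
  have hxx_to0 : Tendsto xx atTop (𝓝 0) :=
    Tendsto.div_atTop tendsto_const_nhds hnp_top
  -- the Gamma-ratio correction factor
  have hrr : ∀ k : ℕ, Tendsto
      (fun N => Real.Gamma (np N) /
        (Real.Gamma (nn N + 1 - (k:ℝ)) * (np N) ^ (L + (k:ℝ)))) atTop (𝓝 1) := by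
    intro k
    have hLk : (0:ℝ) ≤ L + (k:ℝ) := by positivity
    have harg : Tendsto (fun N => nn N + 1 - (k:ℝ)) atTop atTop := by
      have := tendsto_atTop_add_const_right atTop (1 - (k:ℝ)) hnn_top
      refine this.congr fun N => by ring
    have t1 : Tendsto (fun N => Real.Gamma ((nn N + 1 - (k:ℝ)) + (L + (k:ℝ))) /
        (Real.Gamma (nn N + 1 - (k:ℝ)) * (nn N + 1 - (k:ℝ)) ^ (L + (k:ℝ))))
        atTop (𝓝 1) := (GhatAux.tendsto_gamma_ratio hLk).comp harg
    have t2 : Tendsto (fun N => ((nn N + 1 - (k:ℝ)) / np N) ^ (L + (k:ℝ))) atTop (𝓝 1) := by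
      have hb2 : Tendsto (fun N => (nn N + 1 - (k:ℝ)) / np N) atTop (𝓝 1) := by
        have := (GhatAux.tendsto_add_div (-(L + (k:ℝ)))).comp hnp_top
        refine this.congr fun N => ?_
        simp only [Function.comp]
        congr 1
        simp only [hnp]; ring
      have hc : ContinuousAt (fun t : ℝ => t ^ (L + (k:ℝ))) 1 :=
        Real.continuousAt_rpow_const 1 _ (Or.inl one_ne_zero)
      have := hc.tendsto.comp hb2
      simpa [Function.comp_def] using this
    have hmul := t1.mul t2
    rw [one_mul] at hmul
    refine hmul.congr' ?_
    filter_upwards [harg.eventually (eventually_gt_atTop 0)] with N hN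
    have hGa : Real.Gamma (nn N + 1 - (k:ℝ)) ≠ 0 := (Real.Gamma_pos_of_pos hN).ne'
    have hap : (0:ℝ) < (nn N + 1 - (k:ℝ)) ^ (L + (k:ℝ)) := rpow_pos_of_pos hN _
    have hnpp : (0:ℝ) < (np N) ^ (L + (k:ℝ)) := rpow_pos_of_pos (hnp0 N) _
    have e1 : nn N + 1 - (k:ℝ) + (L + (k:ℝ)) = np N := by simp only [hnp]; ring
    rw [e1, div_rpow hN.le (hnp0 N).le]
    field_simp
  -- summability of the limit series
  have hΓk : ∀ k : ℕ, (0:ℝ) < Real.Gamma ((k:ℝ) + L + 1) :=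
    fun k => Real.Gamma_pos_of_pos (by positivity)
  have hsum : Summable (fun k : ℕ => y ^ k / Real.Gamma ((k:ℝ) + L + 1)) := by
    apply summable_of_ratio_norm_eventually_le (r := 1/2) (by norm_num)
    filter_upwards [eventually_ge_atTop ⌈2 * y⌉₊] with k hk
    have hky : 2 * y ≤ (k:ℝ) := le_trans (Nat.le_ceil _) (Nat.cast_le.mpr hk)
    have hrec : Real.Gamma (((k+1:ℕ):ℝ) + L + 1) = ((k:ℝ) + L + 1) * Real.Gamma ((k:ℝ) + L + 1) := by
      push_cast
      rw [show (k:ℝ) + 1 + L + 1 = ((k:ℝ) + L + 1) + 1 by ring,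
        Real.Gamma_add_one (by positivity)]
    have hkL : (0:ℝ) < (k:ℝ) + L + 1 := by positivity
    have hstep : y ^ (k+1) / Real.Gamma (((k+1:ℕ):ℝ) + L + 1)
        = (y / ((k:ℝ) + L + 1)) * (y ^ k / Real.Gamma ((k:ℝ) + L + 1)) := by
      rw [hrec, pow_succ]
      field_simp
    rw [Real.norm_eq_abs, Real.norm_eq_abs,
      abs_of_nonneg (by positivity), abs_of_nonneg (by positivity), hstep]
    have hfac : y / ((k:ℝ) + L + 1) ≤ 1/2 := by
      rw [div_le_iff₀ hkL]; linarith
    exact mul_le_mul_of_nonneg_right hfac (by positivity)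
  set S : ℝ := ∑' k : ℕ, y ^ k / Real.Gamma ((k:ℝ) + L + 1) with hSdef
  have hsum_g : Summable (fun k : ℕ => y ^ L * (y ^ k / Real.Gamma ((k:ℝ) + L + 1))) :=
    hsum.mul_left _
  -- key pointwise identity
  have hkey : ∀ N : ℕ, 1 ≤ N → ∀ k : ℕ, (k:ℝ) ≤ (N:ℝ) + 1 →
      (xx N) ^ L * (Real.Gamma (L + nn N + 1) /
          (Real.Gamma ((k:ℝ) + L + 1) * Real.Gamma (nn N + 1 - (k:ℝ))) * (xx N) ^ k)
      = (y ^ L * (y ^ k / Real.Gamma ((k:ℝ) + L + 1))) *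
        (Real.Gamma (np N) / (Real.Gamma (nn N + 1 - (k:ℝ)) * (np N) ^ (L + (k:ℝ)))) := by
    intro N hN k hk
    have hN1 : (1:ℝ) ≤ (N:ℝ) := by exact_mod_cast hN
    have hd : (0:ℝ) < nn N + 1 - (k:ℝ) := by
      simp only [hnn]
      nlinarith
    have hGnp : Real.Gamma (L + nn N + 1) = Real.Gamma (np N) := by
      congr 1; simp only [hnp]; ring
    have hxxL : (xx N) ^ L = y ^ L / (np N) ^ L := by
      simp only [hxx]
      exact div_rpow hy0.le (hnp0 N).le L
    have hxxk : (xx N) ^ k = y ^ k / (np N) ^ k := div_pow _ _ _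
    have hsplit : (np N) ^ (L + (k:ℝ)) = (np N) ^ L * (np N) ^ k := by
      rw [rpow_add (hnp0 N), rpow_natCast]
    have hGd : Real.Gamma (nn N + 1 - (k:ℝ)) ≠ 0 := (Real.Gamma_pos_of_pos hd).ne'
    have hGk : Real.Gamma ((k:ℝ) + L + 1) ≠ 0 := (hΓk k).ne'
    have hnpL : ((np N) ^ L) ≠ 0 := (rpow_pos_of_pos (hnp0 N) _).ne'
    have hnpk : ((np N:ℝ) ^ k) ≠ 0 := pow_ne_zero _ (hnp0 N).ne'
    rw [hGnp, hxxL, hxxk, hsplit]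
    field_simp
  -- correction factor is in (0, 1]
  have hrr_mem : ∀ N : ℕ, 1 ≤ N → ∀ k : ℕ, (k:ℝ) ≤ (N:ℝ) + 1 →
      0 < Real.Gamma (np N) / (Real.Gamma (nn N + 1 - (k:ℝ)) * (np N) ^ (L + (k:ℝ))) ∧
      Real.Gamma (np N) / (Real.Gamma (nn N + 1 - (k:ℝ)) * (np N) ^ (L + (k:ℝ))) ≤ 1 := by
    intro N hN k hk
    have hN1 : (1:ℝ) ≤ (N:ℝ) := by exact_mod_cast hN
    have hd : (0:ℝ) < nn N + 1 - (k:ℝ) := by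
      simp only [hnn]; nlinarith
    have hden : (0:ℝ) < Real.Gamma (nn N + 1 - (k:ℝ)) * (np N) ^ (L + (k:ℝ)) :=
      mul_pos (Real.Gamma_pos_of_pos hd) (rpow_pos_of_pos (hnp0 N) _)
    constructor
    · exact div_pos (Real.Gamma_pos_of_pos (hnp0 N)) hden
    · rw [div_le_one hden]
      have := GhatAux.gamma_add_le hd (by positivity : (0:ℝ) ≤ L + (k:ℝ))
      rw [show nn N + 1 - (k:ℝ) + (L + (k:ℝ)) = np N by simp only [hnp]; ring] at this
      exact this
  -- limit of the normalized partial sums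
  have hS : ∀ c : ℕ → ℕ, (∀ N, N ≤ c N) → (∀ N, c N ≤ N + 1) →
      Tendsto (fun N => (xx N) ^ L * qS (nn N) L (c N) (xx N)) atTop (𝓝 (y ^ L * S)) := by
    intro c hc1 hc2
    have h1 : Tendsto (fun N => ∑' k : ℕ, (if k ≤ c N then
        (xx N) ^ L * (Real.Gamma (L + nn N + 1) /
          (Real.Gamma ((k:ℝ) + L + 1) * Real.Gamma (nn N + 1 - (k:ℝ))) * (xx N) ^ k) else 0))
        atTop (𝓝 (∑' k : ℕ, y ^ L * (y ^ k / Real.Gamma ((k:ℝ) + L + 1)))) := by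
      apply tendsto_tsum_of_dominated_convergence hsum_g
      · intro k
        have hev : ∀ᶠ N in atTop, (if k ≤ c N then
            (xx N) ^ L * (Real.Gamma (L + nn N + 1) /
              (Real.Gamma ((k:ℝ) + L + 1) * Real.Gamma (nn N + 1 - (k:ℝ))) * (xx N) ^ k) else 0)
            = (y ^ L * (y ^ k / Real.Gamma ((k:ℝ) + L + 1))) *
              (Real.Gamma (np N) / (Real.Gamma (nn N + 1 - (k:ℝ)) * (np N) ^ (L + (k:ℝ)))) := by
          filter_upwards [eventually_ge_atTop (max 1 k)] with N hN
          have hN1 : 1 ≤ N := le_trans (le_max_left 1 k) hN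
          have hkN : k ≤ c N := le_trans (le_trans (le_max_right 1 k) hN) (hc1 N)
          rw [if_pos hkN]
          exact hkey N hN1 k (by
            have : (k:ℝ) ≤ (N:ℝ) := Nat.cast_le.mpr (le_trans (le_max_right 1 k) hN)
            linarith)
        have hlim : Tendsto (fun N => (y ^ L * (y ^ k / Real.Gamma ((k:ℝ) + L + 1))) *
            (Real.Gamma (np N) / (Real.Gamma (nn N + 1 - (k:ℝ)) * (np N) ^ (L + (k:ℝ)))))
            atTop (𝓝 (y ^ L * (y ^ k / Real.Gamma ((k:ℝ) + L + 1)))) := by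
          have h' := Tendsto.const_mul (y ^ L * (y ^ k / Real.Gamma ((k:ℝ) + L + 1))) (hrr k)
          rw [mul_one] at h'
          exact h'
        exact hlim.congr' (hev.mono fun N h => h.symm)
      · filter_upwards [eventually_ge_atTop 1] with N hN k
        by_cases hkc : k ≤ c N
        · rw [if_pos hkc]
          have hkr : (k:ℝ) ≤ (N:ℝ) + 1 := by
            have : (k:ℝ) ≤ ((N:ℕ) + 1 : ℕ) := Nat.cast_le.mpr (le_trans hkc (hc2 N))
            push_cast at this; linarith
          rw [hkey N hN k hkr]
          obtain ⟨hpos, hle⟩ := hrr_mem N hN k hkr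
          have hg0 : (0:ℝ) ≤ y ^ L * (y ^ k / Real.Gamma ((k:ℝ) + L + 1)) := by
            have := (hΓk k).le
            positivity
          rw [Real.norm_eq_abs, abs_of_nonneg (mul_nonneg hg0 hpos.le)]
          calc y ^ L * (y ^ k / Real.Gamma ((k:ℝ) + L + 1)) *
                (Real.Gamma (np N) / (Real.Gamma (nn N + 1 - (k:ℝ)) * (np N) ^ (L + (k:ℝ))))
              ≤ y ^ L * (y ^ k / Real.Gamma ((k:ℝ) + L + 1)) * 1 :=
                mul_le_mul_of_nonneg_left hle hg0
            _ = y ^ L * (y ^ k / Real.Gamma ((k:ℝ) + L + 1)) := mul_one _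
        · rw [if_neg hkc]
          simp only [norm_zero]
          have := (hΓk k).le
          positivity
    rw [tsum_mul_left] at h1
    refine h1.congr fun N => ?_
    rw [tsum_eq_sum (s := Finset.range (c N + 1)) (by
      intro k hk
      rw [if_neg]
      simpa using fun h => hk (Finset.mem_range.mpr (Nat.lt_succ_of_le h)))]
    rw [qS, Finset.mul_sum]
    refine Finset.sum_congr rfl fun k hk => ?_
    rw [if_pos (Nat.lt_succ_iff.mp (Finset.mem_range.mp hk))]
  -- limit of normalized qhat
  have hQ : ∀ c : ℕ → ℕ, (∀ N, N ≤ c N) → (∀ N, c N ≤ N + 1) →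
      Tendsto (fun N => (xx N) ^ L * qhat (nn N) L (c N) (xx N) (xx N)) atTop
        (𝓝 (y ^ L * S + 1 / (y - L) * (y ^ L / Real.Gamma L))) := by
    intro c hc1 hc2
    have hrr0 : Tendsto (fun N => Real.Gamma (np N) / (Real.Gamma (nn N + 1) * (np N) ^ L))
        atTop (𝓝 1) := by
      have h00 := hrr 0
      refine h00.congr fun N => ?_
      norm_num
    have h2 : Tendsto (fun N => (1 / (nn N * xx N - L)) * (y ^ L / Real.Gamma L) *
        (Real.Gamma (np N) / (Real.Gamma (nn N + 1) * (np N) ^ L)))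
        atTop (𝓝 (1 / (y - L) * (y ^ L / Real.Gamma L))) := by
      have hnx : Tendsto (fun N => nn N * xx N) atTop (𝓝 y) := by
        have hfr : Tendsto (fun N => nn N / np N) atTop (𝓝 1) := by
          have := (GhatAux.tendsto_add_div (-(L+1))).comp hnp_top
          refine this.congr fun N => ?_
          simp only [Function.comp]
          congr 1
          simp only [hnp]; ring
        have := hfr.const_mul y
        rw [mul_one] at this
        refine this.congr fun N => ?_
        simp only [hxx]
        field_simp
      have hw : Tendsto (fun N => 1 / (nn N * xx N - L)) atTop (𝓝 (1 / (y - L))) := by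
        have := ((hnx.sub_const L).inv₀ hsub)
        simpa [one_div] using this
      have hconst : Tendsto (fun _ : ℕ => y ^ L / Real.Gamma L) atTop
          (𝓝 (y ^ L / Real.Gamma L)) := tendsto_const_nhds
      have := (hw.mul hconst).mul hrr0
      rw [mul_one] at this
      exact this
    have hcomb := (hS c hc1 hc2).add h2
    refine hcomb.congr fun N => ?_
    have hGnp : Real.Gamma (L + nn N + 1) = Real.Gamma (np N) := by
      congr 1; simp only [hnp]; ring
    have hxxL : (xx N) ^ L = y ^ L / (np N) ^ L := by
      simp only [hxx]
      exact div_rpow hy0.le (hnp0 N).le L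
    have hGn1 : Real.Gamma (nn N + 1) ≠ 0 :=
      (Real.Gamma_pos_of_pos (by have := hnn0 N; linarith)).ne'
    have hnpL : ((np N) ^ L) ≠ 0 := (rpow_pos_of_pos (hnp0 N) _).ne'
    have htail : (xx N) ^ L * ((1 / (nn N * xx N - L)) *
          (Real.Gamma (L + nn N + 1) / (Real.Gamma (nn N + 1) * Real.Gamma L)))
        = 1 / (nn N * xx N - L) * (y ^ L / Real.Gamma L) *
          (Real.Gamma (np N) / (Real.Gamma (nn N + 1) * (np N) ^ L)) := by
      rw [hGnp, hxxL]
      field_simp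
    rw [qhat, mul_add, htail]
  -- limit of the exponential weight
  have hW : Tendsto (fun N => (1 + xx N) ^ (-(nn N + L + 1))) atTop (𝓝 (Real.exp (-y))) := by
    have h0 := (tendsto_one_add_div_rpow_exp y).comp hnp_top
    have h1 : Tendsto (fun N => ((1 + y / np N) ^ (np N))⁻¹) atTop (𝓝 (Real.exp y)⁻¹) :=
      h0.inv₀ (Real.exp_ne_zero y)
    rw [← Real.exp_neg] at h1
    refine h1.congr fun N => ?_
    rw [← Real.rpow_neg (by have := (hxxpos N).le; simp only [hxx] at this ⊢; linarith)]
  -- coefficient limits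
  have hA : Tendsto (fun N : ℕ => (L + (N:ℝ) + 1) / N) atTop (𝓝 1) := by
    have := (GhatAux.tendsto_add_div (L + 1)).comp (tendsto_natCast_atTop_atTop (R := ℝ))
    refine this.congr fun N => ?_
    simp only [Function.comp]
    congr 1
    ring
  have hB : Tendsto (fun N : ℕ => xx N * ((nn N - N - 1) / N)) atTop (𝓝 0) := by
    have hB2 : Tendsto (fun N : ℕ => (nn N - N - 1) / N) atTop (𝓝 b) := by
      have hconst : Tendsto (fun N : ℕ => b - 1 / (N:ℝ)) atTop (𝓝 (b - 0)) :=
        tendsto_const_nhds.sub tendsto_one_div_atTop_nhds_zero_nat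
      rw [sub_zero] at hconst
      refine hconst.congr' ?_
      filter_upwards [eventually_ge_atTop 1] with N hN
      have hN0 : ((N:ℝ)) ≠ 0 := Nat.cast_ne_zero.mpr (by omega)
      simp only [hnn]
      field_simp
      ring
    have := hxx_to0.mul hB2
    rw [zero_mul] at this
    exact this
  -- assemble
  have hQ1 := hQ (fun N => N + 1) (fun N => Nat.le_succ N) (fun N => le_rfl)
  have hQ0 := hQ (fun N => N) (fun N => le_rfl) (fun N => Nat.le_succ N)
  set Q : ℝ := y ^ L * S + 1 / (y - L) * (y ^ L / Real.Gamma L) with hQdef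
  have main : Tendsto (fun N : ℕ =>
      ((L + (N:ℝ) + 1) / N * ((xx N) ^ L * qhat (nn N) L (N + 1) (xx N) (xx N))
        - (xx N * ((nn N - N - 1) / N)) * ((xx N) ^ L * qhat (nn N) L N (xx N) (xx N)))
        * ((1 + xx N) ^ (-(nn N + L + 1))))
      atTop (𝓝 ((1 * Q - 0 * Q) * Real.exp (-y))) :=
    ((hA.mul hQ1).sub (hB.mul hQ0)).mul hW
  rw [one_mul, zero_mul, sub_zero] at main
  have hM : mittagLeffler1 (L + 1) y = S := by
    rw [mittagLeffler1, hSdef]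
    exact tsum_congr fun k => by rw [show (k:ℝ) + (L + 1) = (k:ℝ) + L + 1 by ring]
  have hval : y ^ L * ((y - L) * mittagLeffler1 (L + 1) y + 1 / Real.Gamma L) *
      Real.exp (-y) / (y - L) = Q * Real.exp (-y) := by
    rw [hM, hQdef]
    field_simp
  rw [hval]
  refine main.congr' ?_
  filter_upwards [eventually_ge_atTop 1] with N hN
  have hN0 : ((N:ℝ)) ≠ 0 := Nat.cast_ne_zero.mpr (by omega)
  have hprod : (N:ℝ) * (((b+1) * N + L + 1) / N) = (b+1) * N + L + 1 := by
    field_simp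
  have hlam2 : (χ / Real.sqrt ((N:ℝ) * (((b+1) * N + L + 1) / N))) ^ 2 = xx N := by
    rw [div_pow, hprod, Real.sq_sqrt (by have := hnp0 N; simp only [hnp, hnn] at this; linarith)]
  have hlamnn : 0 ≤ χ / Real.sqrt ((N:ℝ) * (((b+1) * N + L + 1) / N)) :=
    div_nonneg hχ.le (Real.sqrt_nonneg _)
  have hlam2L : (χ / Real.sqrt ((N:ℝ) * (((b+1) * N + L + 1) / N))) ^ ((2:ℝ) * L) = (xx N) ^ L := by
    rw [show (2:ℝ) = ((2:ℕ):ℝ) by norm_num, Real.rpow_mul hlamnn, Real.rpow_natCast, hlam2]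
  show ((L + (N:ℝ) + 1) / N * ((xx N) ^ L * qhat (nn N) L (N + 1) (xx N) (xx N))
        - (xx N * ((nn N - N - 1) / N)) * ((xx N) ^ L * qhat (nn N) L N (xx N) (xx N)))
        * ((1 + xx N) ^ (-(nn N + L + 1)))
      = (1 / (N : ℝ)) * ghat ((b+1) * N) L N ((χ / Real.sqrt ((N:ℝ) * (((b+1) * N + L + 1) / N))) ^ 2)
        * (χ / Real.sqrt ((N:ℝ) * (((b+1) * N + L + 1) / N))) ^ ((2:ℝ) * L)
        * (1 + (χ / Real.sqrt ((N:ℝ) * (((b+1) * N + L + 1) / N))) ^ 2) ^ (-((b+1) * N + L + 1))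
  rw [hlam2, hlam2L, ghat]
  simp only [hnn]
  ring
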